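/- arXiv:2305.18936 — 3 statements merged into one kernel-verified Lean document; each statement's English description precedes it below -/
import Mathlib

section
/- Let G be a finite group, Γ = Pow(G), and let v ∈ G be a CC-generator whose order o(v) is not a prime power. Then the closed-twin-class of v in Γ_v = Γ[N_Γ[v]] (equivalently, the set of dominating vertices of Γ_v) has exactly φ(o(v)) + 1 elements, where φ is Euler's totient function. -/
/-- The power graph of a group `G`: distinct `x` and `y` are adjacent iff
`x ∈ ⟨y⟩` or `y ∈ ⟨x⟩`. -/
def powGraph (G : Type*) [Group G] : SimpleGraph G where
  Adj x y := x ≠ y ∧ (x ∈ Subgroup.zpowers y ∨ y ∈ Subgroup.zpowers x)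
  symm := by
    constructor
    rintro x y ⟨hne, h⟩
    exact ⟨hne.symm, h.symm⟩
  loopless := by
    constructor
    rintro x ⟨hne, -⟩
    exact hne rfl

/-- The closed neighborhood of a vertex in a simple graph. -/
def closedNbhd {V : Type*} (X : SimpleGraph V) (v : V) : Set V :=
  insert v (X.neighborSet v)

theorem self_mem_closedNbhd {V : Type*} (X : SimpleGraph V) (v : V) :
    v ∈ closedNbhd X v := Set.mem_insert v _

/-- `Γ_v`: the subgraph of the power graph induced on the closed neighborhood of `v`. -/
def powLocal (G : Type*) [Group G] (v : G) :
    SimpleGraph (closedNbhd (powGraph G) v) :=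
  SimpleGraph.induce (closedNbhd (powGraph G) v) (powGraph G)

/-- `v` is a CC-generator: `⟨v⟩` is not properly contained in any cyclic subgroup,
i.e. `v ∈ ⟨g⟩` implies `⟨g⟩ = ⟨v⟩`. -/
def IsCCGenerator {G : Type*} [Group G] (v : G) : Prop :=
  ∀ g : G, v ∈ Subgroup.zpowers g → Subgroup.zpowers g = Subgroup.zpowers v

lemma key_nt {n m : ℕ} (hn : ¬∃ p i : ℕ, p.Prime ∧ n = p ^ i)
    (hmn : m ∣ n) (h1 : 1 < m) (hlt : m < n) :
    ∃ d, d ∣ n ∧ ¬ d ∣ m ∧ ¬ m ∣ d := by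
  have hn0 : n ≠ 0 := fun h => hn ⟨2, 0, Nat.prime_two, by omega⟩
  have hm0 : m ≠ 0 := by omega
  by_cases hpp : ∃ p i : ℕ, p.Prime ∧ m = p ^ i
  · obtain ⟨p, i, hp, rfl⟩ := hpp
    have hpdvdn : p ∣ n := dvd_trans (dvd_pow_self p (by
      rintro rfl; simp at h1)) hmn
    -- there is a prime q ≠ p dividing n
    have : ∃ q, q.Prime ∧ q ∣ n ∧ q ≠ p := by
      by_contra h
      push_neg at h
      exact hn ⟨p, _, hp, Nat.eq_prime_pow_of_unique_prime_dvd hn0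
        (fun {d} hd hdn => h d hd hdn)⟩
    obtain ⟨q, hq, hqn, hqp⟩ := this
    refine ⟨q, hqn, ?_, ?_⟩
    · intro hdvd
      exact hqp (((Nat.prime_dvd_prime_iff_eq hq hp).mp (Nat.Prime.dvd_of_dvd_pow hq hdvd)))
    · intro hdvd
      -- p^i ∣ q with p^i > 1 forces p^i = q, but q ≠ p
      have := (Nat.dvd_prime hq).mp hdvd
      rcases this with h' | h'
      · omega
      · have : p ∣ q := h' ▸ dvd_pow_self p (by rintro rfl; simp at h1)
        exact hqp ((Nat.prime_dvd_prime_iff_eq hp hq).mp this).symm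
  · -- m not a prime power: pick prime p with m.factorization p < n.factorization p
    have : ∃ p, m.factorization p < n.factorization p := by
      by_contra h
      push_neg at h
      have : n ∣ m := (Nat.factorization_le_iff_dvd hn0 hm0).mp (fun p => h p)
      exact absurd (Nat.le_of_dvd (by omega) this) (by omega)
    obtain ⟨p, hplt⟩ := this
    have hp : p.Prime := by
      by_contra h
      rw [Nat.factorization_eq_zero_of_not_prime n h] at hplt
      omega
    refine ⟨p ^ n.factorization p, Nat.ordProj_dvd n p, ?_, ?_⟩
    · intro hdvd
      rw [(Nat.Prime.pow_dvd_iff_le_factorization hp hm0)] at hdvd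
      omega
    · intro hdvd
      obtain ⟨j, _, rfl⟩ := (Nat.dvd_prime_pow hp).mp hdvd
      exact hpp ⟨p, j, hp, rfl⟩

set_option linter.unusedSectionVars false

section lemmas
variable {G : Type*} [Group G] [Finite G] (v : G)

lemma closedNbhd_powGraph_eq (hcc : IsCCGenerator v) :
    closedNbhd (powGraph G) v = (Subgroup.zpowers v : Set G) := by
  ext x
  constructor
  · rintro (rfl | hadj)
    · exact Subgroup.mem_zpowers x
    · obtain ⟨hne, h | h⟩ := hadj
      · exact (hcc x h) ▸ Subgroup.mem_zpowers x
      · exact h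
  · intro hx
    by_cases hxv : x = v
    · rw [hxv]; exact self_mem_closedNbhd _ v
    · exact Set.mem_insert_of_mem _ ⟨fun h => hxv h.symm, Or.inr hx⟩

-- zpowers v is cyclic
lemma isCyclic_zpowers : IsCyclic (Subgroup.zpowers v) := by
  refine ⟨⟨⟨v, Subgroup.mem_zpowers v⟩, ?_⟩⟩
  rintro ⟨x, k, rfl⟩
  exact ⟨k, by ext; simp⟩

end lemmas

/-- For a CC-generator `v` whose order is not a prime power, the closed-twin-class of
`v` in `Γ_v` has exactly `φ(o(v)) + 1` elements. -/
theorem twin_class_of_ccGenerator_card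
    {G : Type*} [Group G] [Finite G] (v : G)
    (hcc : IsCCGenerator v)
    (hnpp : ¬ ∃ p i : ℕ, p.Prime ∧ orderOf v = p ^ i) :
    {w : closedNbhd (powGraph G) v |
        closedNbhd (powLocal G v) w =
          closedNbhd (powLocal G v) ⟨v, self_mem_closedNbhd _ v⟩}.ncard =
      Nat.totient (orderOf v) + 1 := by
  classical
  set n := orderOf v with hn
  have hNv := closedNbhd_powGraph_eq v hcc
  have hn0 : n ≠ 0 := (orderOf_pos v).ne'
  have hn1 : n ≠ 1 := fun h => hnpp ⟨2, 0, Nat.prime_two, by omega⟩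
  have hmemz : ∀ w : closedNbhd (powGraph G) v, (w : G) ∈ Subgroup.zpowers v := by
    intro w; rw [← SetLike.mem_coe, ← hNv]; exact w.2
  -- the closed neighborhood of v in powLocal is everything
  have hvuniv : closedNbhd (powLocal G v) ⟨v, self_mem_closedNbhd _ v⟩ = Set.univ := by
    ext u
    simp only [Set.mem_univ, iff_true]
    by_cases huv : (u : G) = v
    · have : u = ⟨v, self_mem_closedNbhd _ v⟩ := Subtype.ext huv
      exact this ▸ Set.mem_insert _ _
    · refine Set.mem_insert_of_mem _ ?_
      show (powGraph G).Adj v u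
      exact ⟨fun h => huv h.symm, Or.inr (hmemz u)⟩
  -- characterize domination
  have hchar : ∀ w : closedNbhd (powGraph G) v,
      (closedNbhd (powLocal G v) w = closedNbhd (powLocal G v) ⟨v, self_mem_closedNbhd _ v⟩)
      ↔ ((w : G) = 1 ∨ orderOf (w : G) = n) := by
    intro w
    rw [hvuniv]
    constructor
    · intro huniv
      by_contra hcon
      push_neg at hcon
      obtain ⟨hw1, hwn⟩ := hcon
      set m := orderOf (w : G) with hm
      have hmn : m ∣ n := by
        have := Subgroup.orderOf_dvd_natCard _ (hmemz w)
        rwa [Nat.card_zpowers] at this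
      have hm1 : 1 < m := by
        have : m ≠ 1 := fun h => hw1 (orderOf_eq_one_iff.mp h)
        have : m ≠ 0 := (orderOf_pos _).ne'
        omega
      have hmlt : m < n := lt_of_le_of_ne (Nat.le_of_dvd (by omega) hmn) hwn
      obtain ⟨d, hdn, hdm, hmd⟩ := key_nt hnpp hmn hm1 hmlt
      -- the witness u = v ^ (n / d)
      set u : G := v ^ (n / d) with hu
      have hou : orderOf u = d := by
        rw [hu, orderOf_pow, hn.symm]
        rw [Nat.gcd_eq_right (Nat.div_dvd_of_dvd hdn), Nat.div_div_self hdn hn0]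
      have humem : u ∈ Subgroup.zpowers v := by
        rw [hu]; exact Subgroup.pow_mem _ (Subgroup.mem_zpowers v) _
      have humemN : u ∈ closedNbhd (powGraph G) v := by rw [hNv]; exact humem
      have huw : u ≠ (w : G) := by
        intro h
        rw [h] at hou
        exact hdm (hou ▸ dvd_refl d)
      have := huniv ▸ Set.mem_univ (⟨u, humemN⟩ : closedNbhd (powGraph G) v)
      rcases this with heq | hadj
      · exact huw (congrArg Subtype.val heq)
      · obtain ⟨-, h | h⟩ := hadj
        · -- w ∈ zpowers u : m ∣ d
          have h' : (w : G) ∈ Subgroup.zpowers u := h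
          have := Subgroup.orderOf_dvd_natCard _ h'
          rw [Nat.card_zpowers, hou] at this
          exact hmd this
        · have h' : u ∈ Subgroup.zpowers (w : G) := h
          have := Subgroup.orderOf_dvd_natCard _ h'
          rw [Nat.card_zpowers, hou] at this
          exact hdm this
    · rintro (h1 | hord)
      · ext u
        simp only [Set.mem_univ, iff_true]
        by_cases huw : u = w
        · exact huw ▸ Set.mem_insert _ _
        · refine Set.mem_insert_of_mem _ ?_
          show (powGraph G).Adj (w : G) u
          exact ⟨fun h => huw (Subtype.ext h.symm), Or.inl (h1 ▸ Subgroup.one_mem _)⟩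
      · have hzeq : Subgroup.zpowers (w : G) = Subgroup.zpowers v := by
          apply Subgroup.eq_of_le_of_card_ge (Subgroup.zpowers_le.mpr (hmemz w))
          rw [Nat.card_zpowers, Nat.card_zpowers, hord]
        ext u
        simp only [Set.mem_univ, iff_true]
        by_cases huw : u = w
        · exact huw ▸ Set.mem_insert _ _
        · refine Set.mem_insert_of_mem _ ?_
          show (powGraph G).Adj (w : G) u
          refine ⟨fun h => huw (Subtype.ext h.symm), Or.inr ?_⟩
          rw [hzeq]
          exact hmemz u
  -- rewrite the set
  have hset : {w : closedNbhd (powGraph G) v |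
        closedNbhd (powLocal G v) w =
          closedNbhd (powLocal G v) ⟨v, self_mem_closedNbhd _ v⟩}
      = {w : closedNbhd (powGraph G) v | (w : G) = 1 ∨ orderOf (w : G) = n} := by
    ext w; exact hchar w
  rw [hset]
  -- push down to G via Subtype.val
  have himg : Subtype.val '' {w : closedNbhd (powGraph G) v | (w : G) = 1 ∨ orderOf (w : G) = n}
      = {g : G | g ∈ Subgroup.zpowers v ∧ (g = 1 ∨ orderOf g = n)} := by
    ext g
    constructor
    · rintro ⟨w, hw, rfl⟩
      exact ⟨hmemz w, hw⟩
    · rintro ⟨hg, hcond⟩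
      exact ⟨⟨g, by rw [hNv]; exact hg⟩, hcond, rfl⟩
  rw [← Set.ncard_image_of_injective _ Subtype.val_injective, himg]
  -- split off 1
  have hsplit : {g : G | g ∈ Subgroup.zpowers v ∧ (g = 1 ∨ orderOf g = n)}
      = insert (1 : G) {g : G | g ∈ Subgroup.zpowers v ∧ orderOf g = n} := by
    ext g
    simp only [Set.mem_setOf_eq, Set.mem_insert_iff]
    constructor
    · rintro ⟨hg, rfl | ho⟩
      · exact Or.inl rfl
      · exact Or.inr ⟨hg, ho⟩
    · rintro (rfl | ⟨hg, ho⟩)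
      · exact ⟨Subgroup.one_mem _, Or.inl rfl⟩
      · exact ⟨hg, Or.inr ho⟩
  rw [hsplit, Set.ncard_insert_of_notMem (by simp [hn1.symm] : (1:G) ∉ _) (Set.toFinite _)]
  congr 1
  -- count elements of order n in zpowers v
  have : IsCyclic (Subgroup.zpowers v) := isCyclic_zpowers v
  have : Fintype (Subgroup.zpowers v) := Fintype.ofFinite _
  have hcard : Fintype.card (Subgroup.zpowers v) = n := by
    rw [← Nat.card_eq_fintype_card, Nat.card_zpowers]
  have himg2 : {g : G | g ∈ Subgroup.zpowers v ∧ orderOf g = n}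
      = Subtype.val '' {x : Subgroup.zpowers v | orderOf x = n} := by
    ext g
    constructor
    · rintro ⟨hg, ho⟩
      exact ⟨⟨g, hg⟩, by simpa using ho, rfl⟩
    · rintro ⟨x, hx, rfl⟩
      exact ⟨x.2, by simpa using hx⟩
  rw [himg2, Set.ncard_image_of_injective _ Subtype.val_injective]
  rw [Set.ncard_eq_toFinset_card', Set.toFinset_setOf]
  have := IsCyclic.card_orderOf_eq_totient (α := Subgroup.zpowers v) (d := n) (by rw [hcard])
  convert this using 2
end

section
/- Let G be a finite group, Γ = Pow(G), and let v ∈ G be a CC-generator whose order o(v) is not a prime power. Then for every divisor k of o(v) with 1 < k < o(v), there is a closed-twin-class of Γ_v = Γ[N_Γ[v]] of size exactly φ(k); moreover φ(k) divides φ(o(v)). -/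
open Subgroup

section Aux

lemma aux_zpowers_isCyclic {G : Type*} [Group G] (v : G) : IsCyclic ↥(zpowers v) := by
  refine ⟨⟨⟨v, mem_zpowers v⟩, fun x => ?_⟩⟩
  obtain ⟨k, hk⟩ := x.2
  exact ⟨k, Subtype.ext (by simpa using hk)⟩

lemma aux_mem_zpowers_of_orderOf_dvd {G : Type*} [Group G] [Finite G] {v x y : G}
    (hx : x ∈ zpowers v) (hy : y ∈ zpowers v) (h : orderOf x ∣ orderOf y) :
    x ∈ zpowers y := by
  classical
  haveI : IsCyclic ↥(zpowers v) := aux_zpowers_isCyclic v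
  haveI : Fintype ↥(zpowers v) := Fintype.ofFinite _
  set H := ↥(zpowers v)
  set x' : H := ⟨x, hx⟩
  set y' : H := ⟨y, hy⟩
  set d := orderOf y with hd
  have hd0 : 0 < d := orderOf_pos y
  have hdy' : orderOf y' = d := Subgroup.orderOf_mk y hy
  have hA := IsCyclic.card_pow_eq_one_le (α := H) (n := d) hd0
  set A : Finset H := Finset.univ.filter (fun a : H => a ^ d = 1) with hAdef
  set B : Finset H := (zpowers y' : Set H).toFinset with hBdef
  have hBA : B ⊆ A := by
    intro a ha
    rw [hBdef, Set.mem_toFinset] at ha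
    have : orderOf a ∣ d := hdy' ▸ orderOf_dvd_of_mem_zpowers ha
    simp [hAdef, orderOf_dvd_iff_pow_eq_one.mp this]
  have hBcard : B.card = d := by
    rw [hBdef, Set.toFinset_card, ← hdy']
    exact Fintype.card_zpowers
  have hEq : B = A := Finset.eq_of_subset_of_card_le hBA (by
    rw [hBcard]
    exact hA)
  have hxA : x' ∈ A := by
    have : orderOf x' ∣ d := by
      rw [Subgroup.orderOf_mk]; exact h
    simp [hAdef, orderOf_dvd_iff_pow_eq_one.mp this]
  have : x' ∈ zpowers y' := by
    have := hEq ▸ hxA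
    rwa [hBdef, Set.mem_toFinset] at this
  obtain ⟨j, hj⟩ := this
  exact ⟨j, congrArg Subtype.val hj⟩

lemma aux_exists_lt_factorization {a b : ℕ} (hb : b ≠ 0) (hab : a ∣ b) (hne : a ≠ b) :
    ∃ p : ℕ, p.Prime ∧ a.factorization p < b.factorization p := by
  have ha : a ≠ 0 := fun h => hb (zero_dvd_iff.mp (h ▸ hab))
  obtain ⟨c, hc⟩ := hab
  have hc0 : c ≠ 0 := by rintro rfl; simp at hc; exact hb hc
  have hc1 : c ≠ 1 := by rintro rfl; simp at hc; exact hne hc.symm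
  obtain ⟨p, hp, hpc⟩ := Nat.exists_prime_and_dvd hc1
  refine ⟨p, hp, ?_⟩
  have hpos : 0 < c.factorization p := hp.factorization_pos_of_dvd hc0 hpc
  have hbf : b.factorization p = a.factorization p + c.factorization p := by
    rw [hc, Nat.factorization_mul ha hc0]; simp
  omega

lemma aux_exists_other_prime {n : ℕ} (hnpp : ¬∃ p i : ℕ, p.Prime ∧ n = p ^ i) (p : ℕ) :
    ∃ q : ℕ, q.Prime ∧ q ∣ n ∧ q ≠ p := by
  by_contra hcon
  push_neg at hcon
  have hall : ∀ q : ℕ, q.Prime → q ∣ n → q = p := fun q hq hqn => hcon q hq hqn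
  rcases eq_or_ne n 0 with rfl | hn0
  · have h2 := hall 2 Nat.prime_two (dvd_zero 2)
    have h3 := hall 3 Nat.prime_three (dvd_zero 3)
    omega
  have hn1 : n ≠ 1 := by rintro rfl; exact hnpp ⟨2, 0, Nat.prime_two, rfl⟩
  obtain ⟨q, hq, hqn⟩ := Nat.exists_prime_and_dvd hn1
  have hp : p.Prime := hall q hq hqn ▸ hq
  exact hnpp ⟨p, _, hp, Nat.eq_prime_pow_of_unique_prime_dvd hn0
    (fun hd hdn => hall _ hd hdn)⟩

lemma aux_exists_incomparable {n k : ℕ} (hnpp : ¬∃ p i : ℕ, p.Prime ∧ n = p ^ i)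
    (hkn : k ∣ n) (hk1 : 1 < k) (hklt : k < n) :
    ∃ e : ℕ, e ∣ n ∧ ¬ e ∣ k ∧ ¬ k ∣ e := by
  have hk0 : k ≠ 0 := by omega
  have hn0 : n ≠ 0 := by omega
  by_cases hkpp : ∃ p i : ℕ, p.Prime ∧ k = p ^ i
  · obtain ⟨p, i, hp, rfl⟩ := hkpp
    have hi : i ≠ 0 := by rintro rfl; simp at hk1
    obtain ⟨q, hq, hqn, hqp⟩ := aux_exists_other_prime hnpp p
    refine ⟨q, hqn, ?_, ?_⟩
    · intro h
      exact hqp ((Nat.prime_dvd_prime_iff_eq hq hp).mp (hq.dvd_of_dvd_pow h))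
    · intro h
      have hpq : p ∣ q := (dvd_pow_self p hi).trans h
      exact hqp (((Nat.prime_dvd_prime_iff_eq hp hq).mp hpq).symm)
  · obtain ⟨r, hr, hrlt⟩ := aux_exists_lt_factorization hn0 hkn (by omega)
    refine ⟨r ^ n.factorization r, Nat.ordProj_dvd n r, ?_, ?_⟩
    · intro h
      rw [Nat.Prime.pow_dvd_iff_le_factorization hr hk0] at h
      omega
    · intro h
      obtain ⟨j, _, hj⟩ := (Nat.dvd_prime_pow hr).mp h
      exact hkpp ⟨r, j, hr, hj⟩

lemma aux_exists_separator {n a b : ℕ} (hnpp : ¬∃ p i : ℕ, p.Prime ∧ n = p ^ i)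
    (han : a ∣ n) (hbn : b ∣ n) (ha1 : 1 < a) (hab : a ∣ b) (hne : a ≠ b) (hblt : b < n) :
    ∃ e : ℕ, e ∣ n ∧ ¬((e ∣ a ∨ a ∣ e) ↔ (e ∣ b ∨ b ∣ e)) := by
  have hn0 : n ≠ 0 := by omega
  have hb0 : b ≠ 0 := fun h => hn0 (Nat.eq_zero_of_zero_dvd (h ▸ hbn))
  have ha0 : a ≠ 0 := by omega
  by_cases hap : ∃ p i : ℕ, p.Prime ∧ a = p ^ i
  · obtain ⟨p, α, hp, rfl⟩ := hap
    have hα : α ≠ 0 := by rintro rfl; simp at ha1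
    by_cases hbq : ∃ q : ℕ, q.Prime ∧ q ∣ b ∧ q ≠ p
    · obtain ⟨q, hq, hqb, hqp⟩ := hbq
      have hv : 1 ≤ b.factorization q := hq.factorization_pos_of_dvd hb0 hqb
      refine ⟨q ^ b.factorization q, (Nat.ordProj_dvd b q).trans hbn, ?_⟩
      rw [iff_iff_implies_and_implies]
      intro ⟨_, h2⟩
      rcases h2 (Or.inl (Nat.ordProj_dvd b q)) with h | h
      · have : q ∣ p ^ α := (dvd_pow_self q (by omega)).trans h
        exact hqp ((Nat.prime_dvd_prime_iff_eq hq hp).mp (hq.dvd_of_dvd_pow this))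
      · have : p ∣ q ^ b.factorization q := (dvd_pow_self p hα).trans h
        exact hqp (((Nat.prime_dvd_prime_iff_eq hp hq).mp (hp.dvd_of_dvd_pow this)).symm)
    · push_neg at hbq
      have hball : ∀ q : ℕ, q.Prime → q ∣ b → q = p := hbq
      have hb1 : b ≠ 1 := by
        intro h; rw [h] at hab; exact absurd (Nat.le_of_dvd one_pos hab) (by omega)
      have hbpow : b = p ^ b.primeFactorsList.length :=
        Nat.eq_prime_pow_of_unique_prime_dvd hb0 (fun hd hdn => hball _ hd hdn)
      set β := b.primeFactorsList.length with hβ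
      have hαβ : α < β := by
        have h2 : α ≤ β := (Nat.pow_dvd_pow_iff_le_right hp.one_lt).mp (hbpow ▸ hab)
        have : α ≠ β := by rintro rfl; exact hne hbpow.symm
        omega
      obtain ⟨q, hq, hqn, hqp⟩ := aux_exists_other_prime hnpp p
      have hcop : Nat.Coprime q (p ^ α) :=
        Nat.Coprime.pow_right _ ((Nat.coprime_primes hq hp).mpr hqp)
      refine ⟨q * p ^ α, Nat.Coprime.mul_dvd_of_dvd_of_dvd hcop hqn han, ?_⟩
      rw [iff_iff_implies_and_implies]
      intro ⟨h1, _⟩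
      rcases h1 (Or.inr (dvd_mul_left _ q)) with h | h
      · have hqβ : q ∣ p ^ β := by
          have := (dvd_mul_right q (p ^ α)).trans h
          rwa [hbpow] at this
        exact hqp ((Nat.prime_dvd_prime_iff_eq hq hp).mp (hq.dvd_of_dvd_pow hqβ))
      · have hcop' : Nat.Coprime b q := by
          rw [hbpow]
          exact Nat.Coprime.pow_left _ ((Nat.coprime_primes hp hq).mpr (fun h => hqp h.symm))
        have hba : b ∣ p ^ α := Nat.Coprime.dvd_of_dvd_mul_left hcop' h
        rw [hbpow] at hba
        have : β ≤ α := (Nat.pow_dvd_pow_iff_le_right hp.one_lt).mp hba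
        omega
  · obtain ⟨p, hp, hplt⟩ := aux_exists_lt_factorization hb0 hab hne
    refine ⟨p ^ b.factorization p, (Nat.ordProj_dvd b p).trans hbn, ?_⟩
    rw [iff_iff_implies_and_implies]
    intro ⟨_, h2⟩
    rcases h2 (Or.inl (Nat.ordProj_dvd b p)) with h | h
    · rw [Nat.Prime.pow_dvd_iff_le_factorization hp ha0] at h
      omega
    · obtain ⟨j, _, hj⟩ := (Nat.dvd_prime_pow hp).mp h
      exact hap ⟨p, j, hp, hj⟩

lemma aux_divisor_unique {n k m : ℕ} (hnpp : ¬∃ p i : ℕ, p.Prime ∧ n = p ^ i)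
    (hkn : k ∣ n) (hk1 : 1 < k) (hklt : k < n) (hmn : m ∣ n)
    (H : ∀ e : ℕ, e ∣ n → ((e ∣ m ∨ m ∣ e) ↔ (e ∣ k ∨ k ∣ e))) : m = k := by
  have hn0 : n ≠ 0 := by omega
  by_contra hne
  obtain ⟨e, hen, he1, he2⟩ := aux_exists_incomparable hnpp hkn hk1 hklt
  have hm1 : m ≠ 1 := by rintro rfl; exact ((H e hen).mp (Or.inr (one_dvd e))).elim he1 he2
  have hmn' : m ≠ n := by rintro rfl; exact ((H e hen).mp (Or.inl hen)).elim he1 he2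
  have hm0 : m ≠ 0 := fun h => hn0 (Nat.eq_zero_of_zero_dvd (h ▸ hmn))
  have hcomp : k ∣ m ∨ m ∣ k := (H k hkn).mpr (Or.inl dvd_rfl)
  have hmlt : m < n := lt_of_le_of_ne (Nat.le_of_dvd (by omega) hmn) hmn'
  rcases hcomp with h | h
  · obtain ⟨e', he'n, hsep⟩ := aux_exists_separator hnpp hkn hmn hk1 h (fun hh => hne hh.symm) hmlt
    exact hsep ((H e' he'n).symm)
  · obtain ⟨e', he'n, hsep⟩ := aux_exists_separator hnpp hmn hkn (by omega) h hne hklt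
    exact hsep (H e' he'n)

lemma aux_powGraph_adj {G : Type*} [Group G] (x y : G) :
    (powGraph G).Adj x y ↔ x ≠ y ∧ (x ∈ zpowers y ∨ y ∈ zpowers x) := Iff.rfl

lemma aux_closedNbhd_powGraph_eq {G : Type*} [Group G] {v : G} (hcc : IsCCGenerator v) :
    closedNbhd (powGraph G) v = (zpowers v : Set G) := by
  ext x
  simp only [closedNbhd, Set.mem_insert_iff, SimpleGraph.mem_neighborSet, aux_powGraph_adj]
  constructor
  · rintro (rfl | ⟨-, h | h⟩)
    · exact mem_zpowers x
    · rw [← hcc x h]; exact mem_zpowers x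
    · exact h
  · intro hx
    rcases eq_or_ne x v with rfl | hne
    · exact Or.inl rfl
    · exact Or.inr ⟨hne.symm, Or.inr hx⟩

lemma aux_closedNbhd_powLocal {G : Type*} [Group G] (v : G)
    (u w : closedNbhd (powGraph G) v) :
    w ∈ closedNbhd (powLocal G v) u ↔
      ((w : G) ∈ zpowers (u : G) ∨ (u : G) ∈ zpowers (w : G)) := by
  simp only [closedNbhd, Set.mem_insert_iff, SimpleGraph.mem_neighborSet]
  have hadj : (powLocal G v).Adj u w ↔
      ((u : G) ≠ (w : G) ∧ ((u : G) ∈ zpowers (w : G) ∨ (w : G) ∈ zpowers (u : G))) := Iff.rfl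
  show w = u ∨ (powLocal G v).Adj u w ↔ _
  rw [hadj]
  constructor
  · rintro (rfl | ⟨-, h | h⟩)
    · exact Or.inl (mem_zpowers _)
    · exact Or.inr h
    · exact Or.inl h
  · intro h
    rcases eq_or_ne w u with rfl | hne
    · exact Or.inl rfl
    · exact Or.inr ⟨fun hh => hne (Subtype.ext hh.symm), h.symm⟩

end Aux

/-- For a CC-generator `v` whose order is not a prime power and every divisor `k` of
`o(v)` with `1 < k < o(v)`, there is a closed-twin-class of `Γ_v` of size exactly
`φ(k)`; moreover `φ(k)` divides `φ(o(v))`. -/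
theorem twin_class_of_divisor_card
    {G : Type*} [Group G] [Finite G] (v : G)
    (hcc : IsCCGenerator v)
    (hnpp : ¬ ∃ p i : ℕ, p.Prime ∧ orderOf v = p ^ i) :
    ∀ k : ℕ, k ∣ orderOf v → 1 < k → k < orderOf v →
      (∃ u : closedNbhd (powGraph G) v,
        {w : closedNbhd (powGraph G) v |
            closedNbhd (powLocal G v) w = closedNbhd (powLocal G v) u}.ncard =
          Nat.totient k) ∧
      Nat.totient k ∣ Nat.totient (orderOf v) := by
  intro k hk hk1 hklt
  refine ⟨?_, Nat.totient_dvd_of_dvd hk⟩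
  classical
  have hn0 : (0 : ℕ) < orderOf v := orderOf_pos v
  have hNset : closedNbhd (powGraph G) v = (zpowers v : Set G) :=
    aux_closedNbhd_powGraph_eq hcc
  have hvmem : ∀ x : closedNbhd (powGraph G) v, (x : G) ∈ zpowers v := by
    intro x; exact (Set.ext_iff.mp hNset _).mp x.2
  have horder : ∀ e : ℕ, e ∣ orderOf v → orderOf (v ^ (orderOf v / e)) = e := by
    intro e he
    rw [orderOf_pow, Nat.gcd_eq_right (Nat.div_dvd_of_dvd he),
      Nat.div_div_self he (by omega)]
  have hmemN : ∀ e : ℕ, v ^ (orderOf v / e) ∈ closedNbhd (powGraph G) v := by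
    intro e
    rw [hNset]
    exact Subgroup.pow_mem _ (mem_zpowers v) _
  set u : closedNbhd (powGraph G) v := ⟨v ^ (orderOf v / k), hmemN k⟩ with hu
  have huk : orderOf (u : G) = k := horder k hk
  refine ⟨u, ?_⟩
  have hcompiff : ∀ x y : closedNbhd (powGraph G) v,
      (x ∈ closedNbhd (powLocal G v) y ↔
        (orderOf (x : G) ∣ orderOf (y : G) ∨ orderOf (y : G) ∣ orderOf (x : G))) := by
    intro x y
    rw [aux_closedNbhd_powLocal]
    constructor
    · rintro (h | h)
      · exact Or.inl (orderOf_dvd_of_mem_zpowers h)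
      · exact Or.inr (orderOf_dvd_of_mem_zpowers h)
    · rintro (h | h)
      · exact Or.inl (aux_mem_zpowers_of_orderOf_dvd (hvmem x) (hvmem y) h)
      · exact Or.inr (aux_mem_zpowers_of_orderOf_dvd (hvmem y) (hvmem x) h)
  have hset : {w : closedNbhd (powGraph G) v |
        closedNbhd (powLocal G v) w = closedNbhd (powLocal G v) u}
      = {w : closedNbhd (powGraph G) v | orderOf (w : G) = k} := by
    ext w
    simp only [Set.mem_setOf_eq]
    constructor
    · intro hw
      apply aux_divisor_unique hnpp hk hk1 hklt (orderOf_dvd_of_mem_zpowers (hvmem w))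
      intro e he
      have hx : orderOf ((⟨v ^ (orderOf v / e), hmemN e⟩ : closedNbhd (powGraph G) v) : G) = e :=
        horder e he
      have hiff := Set.ext_iff.mp hw (⟨v ^ (orderOf v / e), hmemN e⟩ : closedNbhd (powGraph G) v)
      rw [hcompiff, hcompiff, hx, huk] at hiff
      exact hiff
    · intro hw
      apply Set.ext
      intro x
      show x ∈ closedNbhd (powLocal G v) w ↔ x ∈ closedNbhd (powLocal G v) u
      rw [hcompiff x w, hcompiff x u, hw, huk]
  rw [hset]
  -- counting
  haveI : Fintype ↥(zpowers v) := Fintype.ofFinite _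
  haveI : IsCyclic ↥(zpowers v) := aux_zpowers_isCyclic v
  have hcardH : Fintype.card ↥(zpowers v) = orderOf v := by
    rw [← Nat.card_eq_fintype_card, Nat.card_zpowers]
  have E : {w : closedNbhd (powGraph G) v | orderOf (w : G) = k} ≃
      {h : ↥(zpowers v) // orderOf h = k} :=
    { toFun := fun w => ⟨⟨(w.1 : G), hvmem w.1⟩, by
        rw [Subgroup.orderOf_mk]; exact w.2⟩
      invFun := fun h => ⟨⟨(h.1 : G), by rw [hNset]; exact h.1.2⟩, by
        have := h.2
        rwa [← Subgroup.orderOf_coe] at this⟩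
      left_inv := fun w => by ext; rfl
      right_inv := fun h => by ext; rfl }
  rw [← Nat.card_coe_set_eq, Nat.card_congr E, Nat.card_eq_fintype_card,
    Fintype.card_subtype]
  exact IsCyclic.card_orderOf_eq_totient (by rw [hcardH]; exact hk)
end

section
/- Let G be a finite group, Γ = Pow(G), and let v ∈ G be a nontrivial p-power element (o(v) = p^i, i ≥ 1, p prime) that is not a CC-generator. Suppose every u ∈ N_Γ[v] with o(u) > o(v) that is a closed-twin of v in Γ_v = Γ[N_Γ[v]] satisfies deg_Γ(u) ≤ deg_Γ(v). Let y be a closed-twin of v in Γ_v of maximum order among all closed-twins of v in Γ_v, and let S = {x ∈ N_Γ[v] : o(y) divides o(x) and o(x) ≠ o(y)}. Then: (1) the set of closed-twins of v in Γ_v is exactly ⟨y⟩; and (2) N_Γ[v] is the disjoint union of ⟨y⟩ and S. -/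
set_option linter.unusedSectionVars false

section Helpers

open Subgroup

variable {G : Type*} [Group G] [Finite G]

lemma pow_gcd_mem_zpowers (g : G) (t : ℕ) :
    g ^ Nat.gcd (orderOf g) t ∈ Subgroup.zpowers (g ^ t) := by
  rw [Subgroup.mem_zpowers_iff]
  refine ⟨Int.gcdB (orderOf g) t, ?_⟩
  have h : ((Nat.gcd (orderOf g) t : ℤ)) =
      (orderOf g : ℤ) * Int.gcdA (orderOf g) t + (t : ℤ) * Int.gcdB (orderOf g) t := by
    have := Int.gcd_eq_gcd_ab (orderOf g : ℤ) (t : ℤ)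
    rwa [Int.gcd_natCast_natCast] at this
  have h1 : g ^ ((orderOf g : ℕ) : ℤ) = 1 := by rw [zpow_natCast, pow_orderOf_eq_one]
  calc (g ^ t) ^ Int.gcdB (orderOf g) t
      = (g ^ ((orderOf g : ℕ) : ℤ)) ^ Int.gcdA (orderOf g) t *
        (g ^ ((t : ℕ) : ℤ)) ^ Int.gcdB (orderOf g) t := by
        rw [h1, one_zpow, one_mul, zpow_natCast]
    _ = g ^ ((orderOf g : ℤ) * Int.gcdA (orderOf g) t +
          (t : ℤ) * Int.gcdB (orderOf g) t) := by
        rw [← zpow_mul, ← zpow_mul, ← zpow_add]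
    _ = g ^ Nat.gcd (orderOf g) t := by rw [← h, zpow_natCast]

lemma pow_mem_zpowers_pow_of_dvd (g : G) {s t : ℕ} (h : t ∣ s) :
    g ^ s ∈ Subgroup.zpowers (g ^ t) := by
  rw [Subgroup.mem_zpowers_iff]
  refine ⟨((s / t : ℕ) : ℤ), ?_⟩
  rw [zpow_natCast, ← pow_mul, Nat.mul_div_cancel' h]

lemma zpowers_pow_eq_gcd (g : G) (t : ℕ) :
    Subgroup.zpowers (g ^ t) = Subgroup.zpowers (g ^ Nat.gcd (orderOf g) t) := by
  apply le_antisymm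
  · rw [Subgroup.zpowers_le]
    exact pow_mem_zpowers_pow_of_dvd g (Nat.gcd_dvd_right _ _)
  · rw [Subgroup.zpowers_le]
    exact pow_gcd_mem_zpowers g t

lemma mem_zpowers_of_orderOf_dvd_of_pPow {g u w : G} {p a : ℕ} (hp : p.Prime)
    (hg : orderOf g = p ^ a) (hu : u ∈ Subgroup.zpowers g) (hw : w ∈ Subgroup.zpowers g)
    (hdvd : orderOf u ∣ orderOf w) : u ∈ Subgroup.zpowers w := by
  obtain ⟨s, rfl⟩ := mem_powers_iff_mem_zpowers.mpr hu
  obtain ⟨t, rfl⟩ := mem_powers_iff_mem_zpowers.mpr hw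
  beta_reduce at hdvd ⊢
  have hgs : Nat.gcd (orderOf g) s ∣ p ^ a := hg ▸ Nat.gcd_dvd_left _ _
  have hgt : Nat.gcd (orderOf g) t ∣ p ^ a := hg ▸ Nat.gcd_dvd_left _ _
  obtain ⟨b, hb, hbe⟩ := (Nat.dvd_prime_pow hp).mp hgs
  obtain ⟨c, hc, hce⟩ := (Nat.dvd_prime_pow hp).mp hgt
  rw [orderOf_pow, orderOf_pow, hbe, hce, hg, Nat.pow_div hb hp.pos,
    Nat.pow_div hc hp.pos] at hdvd
  have hle : a - b ≤ a - c := (Nat.pow_dvd_pow_iff_le_right hp.one_lt).mp hdvd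
  have hcb : c ≤ b := by omega
  have h1 : g ^ s ∈ Subgroup.zpowers (g ^ Nat.gcd (orderOf g) s) :=
    pow_mem_zpowers_pow_of_dvd g (Nat.gcd_dvd_right _ _)
  have h2 : Subgroup.zpowers (g ^ Nat.gcd (orderOf g) s) ≤
      Subgroup.zpowers (g ^ Nat.gcd (orderOf g) t) := by
    rw [Subgroup.zpowers_le, hbe, hce]
    exact pow_mem_zpowers_pow_of_dvd g (pow_dvd_pow p hcb)
  rw [zpowers_pow_eq_gcd g t]
  exact h2 h1

lemma zpowers_eq_of_mem_of_orderOf_le {u w : G} (h : u ∈ Subgroup.zpowers w)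
    (ho : orderOf w ≤ orderOf u) : Subgroup.zpowers u = Subgroup.zpowers w :=
  Subgroup.eq_of_le_of_card_ge (Subgroup.zpowers_le.mpr h)
    (by rw [Nat.card_zpowers, Nat.card_zpowers]; exact ho)

end Helpers

section GraphHelpers

variable {G : Type*} [Group G]

lemma powGraph_adj {x y : G} :
    (powGraph G).Adj x y ↔ x ≠ y ∧ (x ∈ Subgroup.zpowers y ∨ y ∈ Subgroup.zpowers x) :=
  Iff.rfl

lemma powLocal_adj {v : G} {a b : closedNbhd (powGraph G) v} :
    (powLocal G v).Adj a b ↔ (powGraph G).Adj ↑a ↑b :=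
  Iff.rfl

lemma mem_cn_iff {v u : G} :
    u ∈ closedNbhd (powGraph G) v ↔
      (u ∈ Subgroup.zpowers v ∨ v ∈ Subgroup.zpowers u) := by
  constructor
  · intro h
    rcases Set.mem_insert_iff.mp h with rfl | hadj
    · exact Or.inl (Subgroup.mem_zpowers u)
    · exact (powGraph_adj.mp hadj).2.symm
  · intro h
    by_cases he : u = v
    · subst he
      exact Set.mem_insert _ _
    · exact Set.mem_insert_iff.mpr
        (Or.inr (powGraph_adj.mpr ⟨fun hvu => he hvu.symm, h.symm⟩))

lemma twin_iff (v : G) {z : G} (hz : z ∈ closedNbhd (powGraph G) v) :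
    closedNbhd (powLocal G v) ⟨z, hz⟩ =
      closedNbhd (powLocal G v) ⟨v, self_mem_closedNbhd _ v⟩ ↔
    ∀ x, x ∈ closedNbhd (powGraph G) v →
      (x ∈ Subgroup.zpowers z ∨ z ∈ Subgroup.zpowers x) := by
  have hv_univ : closedNbhd (powLocal G v) ⟨v, self_mem_closedNbhd _ v⟩ = Set.univ := by
    ext ⟨u, hu⟩
    simp only [Set.mem_univ, iff_true]
    rcases Set.mem_insert_iff.mp hu with rfl | hadj
    · exact Set.mem_insert _ _
    · exact Set.mem_insert_iff.mpr (Or.inr (powLocal_adj.mpr hadj))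
  rw [hv_univ, Set.eq_univ_iff_forall]
  constructor
  · intro h x hx
    rcases Set.mem_insert_iff.mp (h ⟨x, hx⟩) with heq | hadj
    · have hxz : x = z := congrArg Subtype.val heq
      subst hxz
      exact Or.inl (Subgroup.mem_zpowers x)
    · exact ((powLocal_adj.mp hadj)).2.symm
  · rintro h ⟨x, hx⟩
    by_cases he : x = z
    · exact Set.mem_insert_iff.mpr (Or.inl (Subtype.ext he))
    · refine Set.mem_insert_iff.mpr (Or.inr (powLocal_adj.mpr ?_))
      exact powGraph_adj.mpr ⟨fun hzx => he hzx.symm, (h x hx).symm⟩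

end GraphHelpers

/-- Lemma on nontrivial `p`-power elements that are not CC-generators: the closed-twins
of `v` in `Γ_v` are exactly the elements of `⟨y⟩`, and `N_Γ[v]` is the disjoint union of
`⟨y⟩` and `S = {x ∈ N_Γ[v] : o(y) ∣ o(x), o(x) ≠ o(y)}`, where `y` is a closed-twin of
`v` in `Γ_v` of maximum order. -/
theorem twins_of_pPower_non_ccGenerator
    {G : Type*} [Group G] [Finite G] (v : G) (p i : ℕ)
    (hp : p.Prime) (hi : 1 ≤ i) (hv : orderOf v = p ^ i)
    (hncc : ¬ IsCCGenerator v)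
    (hdeg : ∀ u : G, ∀ hu : u ∈ closedNbhd (powGraph G) v, orderOf v < orderOf u →
      closedNbhd (powLocal G v) ⟨u, hu⟩ =
        closedNbhd (powLocal G v) ⟨v, self_mem_closedNbhd _ v⟩ →
      ((powGraph G).neighborSet u).ncard ≤ ((powGraph G).neighborSet v).ncard)
    (y : G) (hy : y ∈ closedNbhd (powGraph G) v)
    (hytwin : closedNbhd (powLocal G v) ⟨y, hy⟩ =
      closedNbhd (powLocal G v) ⟨v, self_mem_closedNbhd _ v⟩)
    (hymax : ∀ z : G, ∀ hz : z ∈ closedNbhd (powGraph G) v,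
      closedNbhd (powLocal G v) ⟨z, hz⟩ =
        closedNbhd (powLocal G v) ⟨v, self_mem_closedNbhd _ v⟩ →
      orderOf z ≤ orderOf y) :
    {z : G | ∃ hz : z ∈ closedNbhd (powGraph G) v,
        closedNbhd (powLocal G v) ⟨z, hz⟩ =
          closedNbhd (powLocal G v) ⟨v, self_mem_closedNbhd _ v⟩} =
      (Subgroup.zpowers y : Set G) ∧
    closedNbhd (powGraph G) v =
      (Subgroup.zpowers y : Set G) ∪
        {x ∈ closedNbhd (powGraph G) v | orderOf y ∣ orderOf x ∧ orderOf x ≠ orderOf y} ∧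
    Disjoint (Subgroup.zpowers y : Set G)
      {x ∈ closedNbhd (powGraph G) v | orderOf y ∣ orderOf x ∧ orderOf x ≠ orderOf y} := by
  classical
  have hvy : orderOf v ≤ orderOf y := hymax v (self_mem_closedNbhd _ v) rfl
  have hycomp : ∀ x, x ∈ closedNbhd (powGraph G) v →
      (x ∈ Subgroup.zpowers y ∨ y ∈ Subgroup.zpowers x) := (twin_iff v hy).mp hytwin
  -- v ∈ ⟨y⟩
  have hvmemy : v ∈ Subgroup.zpowers y := by
    rcases mem_cn_iff.mp hy with h | h
    · have heq := zpowers_eq_of_mem_of_orderOf_le h hvy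
      rw [heq]
      exact Subgroup.mem_zpowers v
    · exact h
  -- every prime dividing orderOf y is p
  have hop : ∀ q : ℕ, q.Prime → q ∣ orderOf y → q = p := by
    intro q hq hqd
    rcases eq_or_lt_of_le hvy with heq | hlt
    · rw [← heq, hv] at hqd
      exact (Nat.prime_dvd_prime_iff_eq hq hp).mp (hq.dvd_of_dvd_pow hqd)
    · -- via hdeg : N[y] = N[v]
      have hcsub : closedNbhd (powGraph G) v ⊆ closedNbhd (powGraph G) y := by
        intro x hx
        exact mem_cn_iff.mpr (hycomp x hx)
      have hdle := hdeg y hy hlt hytwin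
      have hcard : ∀ w : G, (closedNbhd (powGraph G) w).ncard =
          ((powGraph G).neighborSet w).ncard + 1 := fun w =>
        Set.ncard_insert_of_notMem (fun h => (powGraph G).irrefl h) (Set.toFinite _)
      have hle : (closedNbhd (powGraph G) y).ncard ≤ (closedNbhd (powGraph G) v).ncard := by
        rw [hcard, hcard]
        omega
      have hNy : closedNbhd (powGraph G) v = closedNbhd (powGraph G) y :=
        Set.eq_of_subset_of_ncard_le hcsub hle (Set.toFinite _)
      have hzy : y ^ (orderOf y / q) ∈ Subgroup.zpowers y :=
        Subgroup.mem_zpowers_iff.mpr ⟨((orderOf y / q : ℕ) : ℤ), by rw [zpow_natCast]⟩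
      have hoz : orderOf (y ^ (orderOf y / q)) = q :=
        orderOf_pow_orderOf_div (orderOf_pos y).ne' hqd
      have hzN : y ^ (orderOf y / q) ∈ closedNbhd (powGraph G) v := by
        rw [hNy]
        exact mem_cn_iff.mpr (Or.inl hzy)
      rcases mem_cn_iff.mp hzN with h | h
      · have hqd2 : q ∣ p ^ i := by
          have := orderOf_dvd_of_mem_zpowers h
          rwa [hoz, hv] at this
        exact (Nat.prime_dvd_prime_iff_eq hq hp).mp (hq.dvd_of_dvd_pow hqd2)
      · have hqd2 : p ^ i ∣ q := by
          have := orderOf_dvd_of_mem_zpowers h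
          rwa [hoz, hv] at this
        have hpq : p ∣ q := dvd_trans (dvd_pow_self p (by omega : i ≠ 0)) hqd2
        exact ((Nat.prime_dvd_prime_iff_eq hp hq).mp hpq).symm
  obtain ⟨a, hoy⟩ : ∃ a, orderOf y = p ^ a :=
    ⟨_, Nat.eq_prime_pow_of_unique_prime_dvd (orderOf_pos y).ne'
      (fun {d} hd hdd => hop d hd hdd)⟩
  -- comparability within ⟨y⟩
  have hcompy : ∀ u w : G, u ∈ Subgroup.zpowers y → w ∈ Subgroup.zpowers y →
      (u ∈ Subgroup.zpowers w ∨ w ∈ Subgroup.zpowers u) := by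
    intro u w hu hw
    have hdu : orderOf u ∣ p ^ a := hoy ▸ orderOf_dvd_of_mem_zpowers hu
    have hdw : orderOf w ∣ p ^ a := hoy ▸ orderOf_dvd_of_mem_zpowers hw
    obtain ⟨b, hb, hbe⟩ := (Nat.dvd_prime_pow hp).mp hdu
    obtain ⟨c, hc, hce⟩ := (Nat.dvd_prime_pow hp).mp hdw
    rcases le_total b c with h | h
    · exact Or.inl (mem_zpowers_of_orderOf_dvd_of_pPow hp hoy hu hw
        (by rw [hbe, hce]; exact pow_dvd_pow p h))
    · exact Or.inr (mem_zpowers_of_orderOf_dvd_of_pPow hp hoy hw hu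
        (by rw [hbe, hce]; exact pow_dvd_pow p h))
  -- ⟨y⟩ ⊆ N[v]
  have hsubN : (Subgroup.zpowers y : Set G) ⊆ closedNbhd (powGraph G) v := by
    intro x hx
    exact mem_cn_iff.mpr (hcompy x v hx hvmemy)
  -- Part 1
  have part1 : {z : G | ∃ hz : z ∈ closedNbhd (powGraph G) v,
      closedNbhd (powLocal G v) ⟨z, hz⟩ =
        closedNbhd (powLocal G v) ⟨v, self_mem_closedNbhd _ v⟩} =
      (Subgroup.zpowers y : Set G) := by
    ext z
    simp only [Set.mem_setOf_eq, SetLike.mem_coe]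
    constructor
    · rintro ⟨hz, hztwin⟩
      rcases (twin_iff v hz).mp hztwin y hy with h | h
      · have heq := zpowers_eq_of_mem_of_orderOf_le h (hymax z hz hztwin)
        rw [heq]
        exact Subgroup.mem_zpowers z
      · exact h
    · intro hz
      have hzN : z ∈ closedNbhd (powGraph G) v := hsubN hz
      refine ⟨hzN, (twin_iff v hzN).mpr ?_⟩
      intro x hx
      rcases mem_cn_iff.mp hx with hxv | hvx
      · exact hcompy x z (Subgroup.zpowers_le.mpr hvmemy hxv) hz
      · rcases hycomp x hx with hxy | hyx
        · exact hcompy x z hxy hz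
        · exact Or.inr (Subgroup.zpowers_le.mpr hyx hz)
  refine ⟨part1, ?_, ?_⟩
  · -- union
    apply Set.Subset.antisymm
    · intro x hx
      by_cases hxy : x ∈ Subgroup.zpowers y
      · exact Or.inl hxy
      · refine Or.inr ⟨hx, ?_, ?_⟩
        · rcases hycomp x hx with h | h
          · exact absurd h hxy
          · exact orderOf_dvd_of_mem_zpowers h
        · intro heq
          rcases hycomp x hx with h | h
          · exact hxy h
          · have hx2 : x ∈ Subgroup.zpowers y := by
              rw [zpowers_eq_of_mem_of_orderOf_le h heq.le]
              exact Subgroup.mem_zpowers x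
            exact hxy hx2
    · rintro x (h | ⟨hx, -, -⟩)
      · exact hsubN h
      · exact hx
  · -- disjoint
    rw [Set.disjoint_left]
    rintro x hxy ⟨-, hdvd, hne⟩
    exact hne (Nat.dvd_antisymm (orderOf_dvd_of_mem_zpowers hxy) hdvd)
end
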